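/- Let X be a set equipped with the inductive-limit (final) topology with respect to an increasing sequence of subsets Z₁ ⊆ Z₂ ⊆ ⋯ covering X, each Zᵢ carrying a Noetherian topology and each Zᵢ closed in Z_{i+1}. Then every closed subset of X has at most countably many connected components. -/

import Mathlib

open TopologicalSpace

lemma finite_connectedComponents_of_noetherian {α : Type*} [TopologicalSpace α]
    [TopologicalSpace.NoetherianSpace α] : Finite (ConnectedComponents α) := by
  have hfin : (irreducibleComponents α).Finite :=
    TopologicalSpace.NoetherianSpace.finite_irreducibleComponents
  haveI : Finite (irreducibleComponents α) := hfin.to_subtype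
  have hne : ∀ s : irreducibleComponents α, ∃ x : α, x ∈ (s : Set α) := fun s => s.2.1.1
  choose pt hpt using hne
  have hsurj : Function.Surjective
      (fun s : irreducibleComponents α => (ConnectedComponents.mk (pt s))) := by
    intro c
    obtain ⟨x, rfl⟩ := ConnectedComponents.surjective_coe c
    refine ⟨⟨irreducibleComponent x, irreducibleComponent_mem_irreducibleComponents x⟩, ?_⟩
    have hsub : irreducibleComponent x ⊆ connectedComponent x :=
      IsPreconnected.subset_connectedComponent
        isIrreducible_irreducibleComponent.isPreirreducible.isPreconnected
        mem_irreducibleComponent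
    exact ConnectedComponents.coe_eq_coe'.mpr
      (hsub (hpt ⟨irreducibleComponent x, irreducibleComponent_mem_irreducibleComponents x⟩))
  exact Finite.of_surjective _ hsurj

/-- Let `X` be a set with the inductive-limit (final) topology with
respect to an increasing sequence of subsets `Z 1 ⊆ Z 2 ⊆ ⋯` covering `X`, each `Z i`
carrying a Noetherian (subspace) topology and each `Z i` closed in `Z (i+1)`.  Then every
closed subset of `X` has at most countably many connected components. -/
theorem stmt5 {X : Type*} [TopologicalSpace X] (Z : ℕ → Set X)
    (hmono : Monotone Z) (hcover : ⋃ i, Z i = Set.univ)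
    (hsucc_closed : ∀ i, IsClosed ((Set.inclusion (hmono (Nat.le_succ i))) ''
      (Set.univ : Set (Z i)) : Set (Z (i + 1))))
    (hNoeth : ∀ i, TopologicalSpace.NoetherianSpace (Z i))
    (hfinal : ∀ A : Set X, (∀ i, IsClosed ((↑) ⁻¹' A : Set (Z i))) → IsClosed A)
    (C : Set X) (hC : IsClosed C) :
    Countable (ConnectedComponents C) := by
  haveI := hNoeth
  -- the map from `T i := (↑)⁻¹' C ⊆ Z i` into `C`
  have hcont : ∀ i, Continuous
      (fun z : (Subtype.val ⁻¹' C : Set (Z i)) => (⟨((z : Z i) : X), show ((z : Z i) : X) ∈ C from z.2⟩ : C)) := fun i =>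
    Continuous.subtype_mk (continuous_subtype_val.comp continuous_subtype_val) _
  let f : ∀ i, ConnectedComponents (Subtype.val ⁻¹' C : Set (Z i)) → ConnectedComponents C :=
    fun i => Continuous.connectedComponentsLift
      (ConnectedComponents.continuous_coe.comp (hcont i))
  haveI : ∀ i, Finite (ConnectedComponents (Subtype.val ⁻¹' C : Set (Z i))) := fun i =>
    finite_connectedComponents_of_noetherian
  have hsurj : Function.Surjective
      (fun p : Σ i, ConnectedComponents (Subtype.val ⁻¹' C : Set (Z i)) => f p.1 p.2) := by
    intro c
    obtain ⟨x, rfl⟩ := ConnectedComponents.surjective_coe c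
    have hx : (x : X) ∈ ⋃ i, Z i := hcover ▸ Set.mem_univ _
    obtain ⟨i, hi⟩ := Set.mem_iUnion.mp hx
    refine ⟨⟨i, ConnectedComponents.mk (⟨⟨(x : X), hi⟩, x.2⟩ : (Subtype.val ⁻¹' C : Set (Z i)))⟩, ?_⟩
    show f i (ConnectedComponents.mk _) = _
    simp only [f, Continuous.connectedComponentsLift_apply_coe]
    rfl
  exact hsurj.countable
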